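/- arXiv:2510.26338 — 2 statements merged into one kernel-verified Lean document; each statement's English description precedes it below -/
import Mathlib

section
/- Let λ be a partition of N with length ℓ, and let k_i = λ_i − i + ℓ for i = 1, …, ℓ (a strictly decreasing sequence of nonnegative integers). Then the product of hooklengths of λ satisfies ∏_{(i,j)∈Y_λ} hk_λ(i,j) = (∏_{i=1}^ℓ k_i!) / ∏_{1≤i<j≤ℓ} (k_i − k_j). -/
open Finset

lemma prod_range_sub_eq_factorial (n : ℕ) : ∏ t ∈ range n, (n - t) = n.factorial := by
  induction n with
  | zero => simp
  | succ n ih =>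
    rw [Finset.prod_range_succ']
    simp only [Nat.succ_sub_succ]
    rw [ih, Nat.sub_zero, Nat.factorial_succ, Nat.mul_comm]

lemma row_lemma (ℓ : ℕ) (lam : ℕ → ℕ)
    (hpos : ∀ i, 1 ≤ i → i ≤ ℓ → 0 < lam i)
    (hmono : ∀ i j, 1 ≤ i → i ≤ j → lam j ≤ lam i)
    (i : ℕ) (hi1 : 1 ≤ i) (hi2 : i ≤ ℓ) :
    (∏ j ∈ Icc 1 (lam i),
        ((lam i - j) + (((Icc 1 ℓ).filter (fun i' => j ≤ lam i')).card - i) + 1))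
      * (∏ m ∈ Icc (i+1) ℓ, ((lam i + ℓ - i) - (lam m + ℓ - m)))
    = (lam i + ℓ - i).factorial := by
  set lam' : ℕ → ℕ := fun j => ((Icc 1 ℓ).filter (fun i' => j ≤ lam i')).card with hlam'
  set K : ℕ → ℕ := fun m => lam m + ℓ - m with hK
  -- characterization of lam'
  have hchar : ∀ j m, 1 ≤ m → m ≤ ℓ → (j ≤ lam m ↔ m ≤ lam' j) := by
    intro j m hm1 hm2
    constructor
    · intro h
      have hsub : Icc 1 m ⊆ (Icc 1 ℓ).filter (fun i' => j ≤ lam i') := by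
        intro x hx
        simp only [mem_Icc] at hx
        simp only [mem_filter, mem_Icc]
        exact ⟨⟨hx.1, le_trans hx.2 hm2⟩, le_trans h (hmono x m hx.1 hx.2)⟩
      have := Finset.card_le_card hsub
      simpa using this
    · intro h
      by_contra hc
      push_neg at hc
      have hsub : (Icc 1 ℓ).filter (fun i' => j ≤ lam i') ⊆ Icc 1 (m-1) := by
        intro x hx
        simp only [mem_filter, mem_Icc] at hx
        simp only [mem_Icc]
        refine ⟨hx.1.1, ?_⟩
        by_contra hxm
        push_neg at hxm
        have : lam x ≤ lam m := hmono m x hm1 (by omega)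
        omega
      have := Finset.card_le_card hsub
      simp only [Nat.card_Icc] at this
      simp only [hlam'] at h
      omega
  have hle : ∀ j, lam' j ≤ ℓ := by
    intro j
    have := Finset.card_le_card (Finset.filter_subset (fun i' => j ≤ lam i') (Icc 1 ℓ))
    simpa using this
  have hanti : ∀ j1 j2, j1 ≤ j2 → lam' j2 ≤ lam' j1 := by
    intro j1 j2 h
    apply Finset.card_le_card
    intro x hx
    simp only [mem_filter] at hx ⊢
    exact ⟨hx.1, le_trans h hx.2⟩
  set f : ℕ → ℕ := fun j => (j - 1) + (ℓ - lam' j) with hf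
  -- facts about f on Icc 1 (lam i)
  have hfi : ∀ j, 1 ≤ j → j ≤ lam i → i ≤ lam' j := by
    intro j hj1 hj2
    exact (hchar j i hi1 hi2).1 hj2
  have hfbound : ∀ j, 1 ≤ j → j ≤ lam i → f j < K i := by
    intro j hj1 hj2
    have h1 := hfi j hj1 hj2
    have h2 := hle j
    simp only [hf, hK]
    omega
  have hkbound : ∀ m, i < m → m ≤ ℓ → K m < K i := by
    intro m hm1 hm2
    have := hmono i m hi1 (le_of_lt hm1)
    simp only [hK]
    omega
  have hhk : ∀ j, 1 ≤ j → j ≤ lam i →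
      (lam i - j) + (lam' j - i) + 1 = K i - f j := by
    intro j hj1 hj2
    have h1 := hfi j hj1 hj2
    have h2 := hle j
    simp only [hf, hK]
    omega
  -- injectivity of f
  have hfinj : Set.InjOn f (Icc 1 (lam i)) := by
    intro a ha b hb hab
    simp only [coe_Icc, Set.mem_Icc] at ha hb
    rcases lt_trichotomy a b with h | h | h
    · exfalso
      have := hanti a b (le_of_lt h)
      have h2 := hle a
      simp only [hf] at hab; omega
    · exact h
    · exfalso
      have := hanti b a (le_of_lt h)
      have h2 := hle b
      simp only [hf] at hab; omega
  have hkinj : Set.InjOn K (Icc (i+1) ℓ) := by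
    intro a ha b hb hab
    simp only [coe_Icc, Set.mem_Icc] at ha hb
    rcases lt_trichotomy a b with h | h | h
    · exfalso
      have := hmono a b (by omega) (le_of_lt h)
      simp only [hK] at hab; omega
    · exact h
    · exfalso
      have := hmono b a (by omega) (le_of_lt h)
      simp only [hK] at hab; omega
  -- disjointness: f j ≠ K m
  have hdisj : ∀ j, 1 ≤ j → j ≤ lam i → ∀ m, i < m → m ≤ ℓ → f j ≠ K m := by
    intro j hj1 hj2 m hm1 hm2 heq
    have h2 := hle j
    by_cases hc : j ≤ lam m
    · have := (hchar j m (by omega) hm2).1 hc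
      simp only [hf, hK] at heq; omega
    · push_neg at hc
      have : ¬ (m ≤ lam' j) := by
        intro h
        have := (hchar j m (by omega) hm2).2 h
        omega
      simp only [hf, hK] at heq; omega
  set A := (Icc 1 (lam i)).image f with hA
  set B := (Icc (i+1) ℓ).image K with hB
  have hAB : Disjoint A B := by
    rw [Finset.disjoint_left]
    intro x hx hx'
    simp only [hA, hB, mem_image, mem_Icc] at hx hx'
    obtain ⟨j, hj, hj2⟩ := hx
    obtain ⟨m, hm, hm2⟩ := hx'
    exact hdisj j hj.1 hj.2 m (by omega) hm.2 (by rw [hj2, hm2])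
  have hunion : A ∪ B = range (K i) := by
    apply Finset.eq_of_subset_of_card_le
    · intro x hx
      simp only [mem_union, hA, hB, mem_image, mem_Icc] at hx
      rw [mem_range]
      rcases hx with ⟨j, hj, rfl⟩ | ⟨m, hm, rfl⟩
      · exact hfbound j hj.1 hj.2
      · exact hkbound m (by omega) hm.2
    · rw [Finset.card_union_of_disjoint hAB, Finset.card_range,
        Finset.card_image_of_injOn hfinj, Finset.card_image_of_injOn hkinj]
      simp only [Nat.card_Icc, hK]
      have := hpos i hi1 hi2
      omega
  have h1 : ∏ j ∈ Icc 1 (lam i),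
      ((lam i - j) + (lam' j - i) + 1) = ∏ t ∈ A, (K i - t) := by
    rw [hA, Finset.prod_image hfinj]
    apply Finset.prod_congr rfl
    intro j hj
    simp only [mem_Icc] at hj
    exact hhk j hj.1 hj.2
  have h2 : ∏ m ∈ Icc (i+1) ℓ, ((lam i + ℓ - i) - (lam m + ℓ - m))
      = ∏ t ∈ B, (K i - t) := by
    rw [hB, Finset.prod_image hkinj]
  rw [h1, h2, ← Finset.prod_union hAB, hunion, prod_range_sub_eq_factorial]

/-- Hooklength product formula: for a partition λ of length ℓ with
k_i = λ_i − i + ℓ, the product of the hooklengths of λ times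
∏_{i<j} (k_i − k_j) equals ∏_i k_i!. Here the conjugate partition value
λ'_j is the number of indices 1 ≤ i ≤ ℓ with λ_i ≥ j, and the hooklength
of cell (i,j) is (λ_i − j) + (λ'_j − i) + 1. -/
theorem hooklength_product_formula (ℓ : ℕ) (lam : ℕ → ℕ)
    (hpos : ∀ i, 1 ≤ i → i ≤ ℓ → 0 < lam i)
    (hzero : ∀ i, ℓ < i → lam i = 0)
    (hmono : ∀ i j, 1 ≤ i → i ≤ j → lam j ≤ lam i) :
    ((∏ i ∈ Icc 1 ℓ, ∏ j ∈ Icc 1 (lam i),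
        ((lam i - j) + (((Icc 1 ℓ).filter (fun i' => j ≤ lam i')).card - i) + 1) : ℕ) : ℤ)
      * ∏ p ∈ ((Icc 1 ℓ ×ˢ Icc 1 ℓ).filter (fun p => p.1 < p.2)),
          (((lam p.1 + ℓ - p.1 : ℕ) : ℤ) - ((lam p.2 + ℓ - p.2 : ℕ) : ℤ))
    = ∏ i ∈ Icc 1 ℓ, ((lam i + ℓ - i).factorial : ℤ) := by
  have step1 : ∏ p ∈ ((Icc 1 ℓ ×ˢ Icc 1 ℓ).filter (fun p => p.1 < p.2)),
      (((lam p.1 + ℓ - p.1 : ℕ) : ℤ) - ((lam p.2 + ℓ - p.2 : ℕ) : ℤ))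
    = ∏ i ∈ Icc 1 ℓ, ∏ m ∈ Icc (i+1) ℓ,
      (((lam i + ℓ - i : ℕ) : ℤ) - ((lam m + ℓ - m : ℕ) : ℤ)) := by
    rw [Finset.prod_filter, Finset.prod_product]
    apply Finset.prod_congr rfl
    intro i hi
    rw [← Finset.prod_filter]
    congr 1
    ext m
    simp only [mem_filter, mem_Icc]
    omega
  have step2 : ∀ i ∈ Icc 1 ℓ, ∏ m ∈ Icc (i+1) ℓ,
      (((lam i + ℓ - i : ℕ) : ℤ) - ((lam m + ℓ - m : ℕ) : ℤ))
    = ((∏ m ∈ Icc (i+1) ℓ, ((lam i + ℓ - i) - (lam m + ℓ - m)) : ℕ) : ℤ) := by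
    intro i hi
    simp only [mem_Icc] at hi
    rw [Nat.cast_prod]
    apply Finset.prod_congr rfl
    intro m hm
    simp only [mem_Icc] at hm
    have h1 : lam m + ℓ - m ≤ lam i + ℓ - i := by
      have := hmono i m hi.1 (by omega)
      omega
    rw [Nat.cast_sub h1]
  rw [step1, Nat.cast_prod, ← Finset.prod_mul_distrib]
  apply Finset.prod_congr rfl
  intro i hi
  rw [step2 i hi, ← Nat.cast_mul]
  have hi' := Finset.mem_Icc.mp hi
  rw [row_lemma ℓ lam hpos hmono i hi'.1 hi'.2]
end

section
/- For a Maya diagram M and q ∈ ℕ, the following are equivalent: (i) M ⊆ M + q; (ii) there is no pair (m, k) with m ∈ M, k ∉ M, and m − k = q. Moreover, if q satisfies M ⊆ M + q then q' satisfies M ⊆ M + q' for every q' ≥ λ₁ + ℓ, where λ is the partition corresponding to M with length ℓ; that is, every q ≥ λ₁ + ℓ is a critical degree. -/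
/-- A Maya diagram: a subset of ℤ containing finitely many nonnegative
integers and excluding finitely many negative integers. -/
def IsMaya (M : Set ℤ) : Prop :=
  (M ∩ {m : ℤ | 0 ≤ m}).Finite ∧ ({m : ℤ | m < 0} \ M).Finite

/-- Translation of a Maya diagram. -/
def shift (M : Set ℤ) (n : ℤ) : Set ℤ := {z : ℤ | ∃ m ∈ M, z = m + n}

/-- The Maya diagram M_λ = {λ_i − i : i ≥ 1} of a partition λ. -/
def mayaOfPartition (lam : ℕ → ℕ) : Set ℤ :=
  {z : ℤ | ∃ i : ℕ, 1 ≤ i ∧ z = (lam i : ℤ) - (i : ℤ)}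

/-- For a Maya diagram M with associated partition λ of length ℓ (so that
M is a translate of M_λ): (i) M ⊆ M + q iff (ii) there is no pair m ∈ M,
k ∉ M with m − k = q; moreover every q ≥ λ₁ + ℓ is a critical degree,
i.e. M ⊆ M + q. -/
theorem critical_degree (M : Set ℤ) (hM : IsMaya M)
    (lam : ℕ → ℕ) (ℓ : ℕ) (n : ℤ)
    (hmono : ∀ i j : ℕ, 1 ≤ i → i ≤ j → lam j ≤ lam i)
    (hpos : ∀ i, 1 ≤ i → i ≤ ℓ → 0 < lam i)
    (hzero : ∀ i, ℓ < i → lam i = 0)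
    (hMlam : M = shift (mayaOfPartition lam) n) :
    (∀ q : ℕ, (M ⊆ shift M q ↔ ¬∃ m k : ℤ, m ∈ M ∧ k ∉ M ∧ m - k = q)) ∧
    (∀ q : ℕ, lam 1 + ℓ ≤ q → M ⊆ shift M q) := by
  constructor
  · intro q
    constructor
    · rintro hsub ⟨m, k, hm, hk, hmk⟩
      obtain ⟨m', hm', heq⟩ := hsub hm
      have : k = m' := by omega
      exact hk (this ▸ hm')
    · intro h m hm
      refine ⟨m - q, ?_, by ring⟩
      by_contra hk
      exact h ⟨m, m - q, hm, hk, by ring⟩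
  · intro q hq m hm
    rw [hMlam] at hm ⊢
    obtain ⟨z, ⟨i, hi, hz⟩, hmz⟩ := hm
    have h1 : lam i ≤ lam 1 := hmono 1 i le_rfl hi
    have h2 : ℓ < i → lam i = 0 := hzero i
    set j : ℕ := q - lam i + i with hj
    have hj1 : 1 ≤ j := by omega
    have hjℓ : ℓ < j := by
      rcases le_or_gt i ℓ with h | h
      · omega
      · have := h2 h; omega
    have hlamj : lam j = 0 := hzero j hjℓ
    refine ⟨m - q, ⟨(lam j : ℤ) - (j : ℤ), ⟨j, hj1, rfl⟩, ?_⟩, by ring⟩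
    have hjz : (j : ℤ) = (q : ℤ) - (lam i : ℤ) + i := by
      have : lam i ≤ q := by omega
      push_cast [hj]
      omega
    rw [hlamj, hjz]
    push_cast
    omega
end
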